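/- Assume every root of the characteristic polynomial f has modulus strictly less than 1 and that all roots of f are real. Then there exists a nonempty set 𝒞 ⊆ ℝ^p whose complement has Lebesgue measure zero such that for every initial data x = (x_0,…,x_{p−1}) ∈ 𝒞 there exist r = r(x) > 0, l = l(x) ∈ {1,…,p} and real numbers v_t = v(t,x) with: lim_{t→∞} |x_t/(t^{l−1} r^t) − v_t| = 0, sup_{t≥0} |v_t| < +∞, and liminf_{t→∞} |v_t| > 0, where (x_t) is the solution of (L) with initial data x. -/

import Mathlib

open MeasureTheory Filter Real

section Helpers
open Polynomial

namespace RRGS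

/-- The shift operator on real sequences. -/
noncomputable def S : Module.End ℝ (ℕ → ℝ) where
  toFun x := fun t => x (t + 1)
  map_add' _ _ := rfl
  map_smul' _ _ := rfl

lemma S_apply (x : ℕ → ℝ) (t : ℕ) : S x t = x (t + 1) := rfl

/-- The sequence `t ↦ q(t) μ^t`. -/
noncomputable def seqP (q : ℝ[X]) (μ : ℝ) : ℕ → ℝ := fun t => q.eval (t : ℝ) * μ ^ t

lemma S_sub_smul_apply (μ : ℝ) (q : ℝ[X]) :
    (S - μ • 1) (seqP q μ) = seqP (μ • (q.comp (X + 1) - q)) μ := by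
  funext t
  simp only [LinearMap.sub_apply, LinearMap.smul_apply, Module.End.one_apply, Pi.sub_apply,
    Pi.smul_apply, smul_eq_mul, seqP, S_apply, eval_smul, eval_sub, eval_comp, eval_add, eval_X, eval_one]
  push_cast
  ring

lemma diff_deg {q : ℝ[X]} {d : ℕ} (h : q.natDegree ≤ d + 1) :
    (q.comp (X + 1) - q).natDegree ≤ d := by
  by_cases h0 : q.comp (X + 1) - q = 0
  · simp [h0]
  by_cases hd : q.natDegree = 0
  · obtain ⟨c, rfl⟩ := natDegree_eq_zero.mp hd
    simp at h0
  have hq0 : q ≠ 0 := fun h => hd (by simp [h])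
  have hX1 : (X + 1 : ℝ[X]) = X + C 1 := by simp
  have hnd : (q.comp (X + 1)).natDegree = q.natDegree := by
    rw [natDegree_comp, hX1, natDegree_X_add_C, mul_one]
  have hlc : (q.comp (X + 1)).leadingCoeff = q.leadingCoeff := by
    rw [leadingCoeff_comp (by rw [hX1, natDegree_X_add_C]; norm_num)]
    rw [hX1, leadingCoeff_X_add_C, one_pow, mul_one]
  have hc0 : q.comp (X + 1) ≠ 0 := by
    intro h
    rw [h, leadingCoeff_zero] at hlc
    exact hq0 (leadingCoeff_eq_zero.mp hlc.symm)
  have hdeg : (q.comp (X + 1)).degree = q.degree := by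
    rw [degree_eq_natDegree hc0, degree_eq_natDegree hq0, hnd]
  have hlt : (q.comp (X + 1) - q).degree < (q.comp (X + 1)).degree :=
    degree_sub_lt hdeg hc0 hlc
  have := natDegree_lt_natDegree h0 (hlt.trans_eq hdeg)
  omega

lemma ker_pow (μ : ℝ) : ∀ (d : ℕ) (q : ℝ[X]), q.natDegree ≤ d →
    ((S - μ • 1) ^ (d + 1)) (seqP q μ) = 0 := by
  intro d
  induction d with
  | zero =>
    intro q hq
    obtain ⟨c, rfl⟩ := natDegree_eq_zero.mp (Nat.le_zero.mp hq)
    rw [pow_one, S_sub_smul_apply]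
    funext t
    simp [seqP]
  | succ d ih =>
    intro q hq
    rw [pow_succ, Module.End.mul_apply, S_sub_smul_apply]
    exact ih _ (le_trans (natDegree_smul_le _ _) (diff_deg hq))

/-- `X·d/dX` as an endomorphism of `ℝ[X]`. -/
noncomputable def Dop : Module.End ℝ ℝ[X] :=
  (LinearMap.mulLeft ℝ (X : ℝ[X])).comp Polynomial.derivative

lemma Dop_apply (Q : ℝ[X]) : Dop Q = X * derivative Q := rfl

lemma Dop_pow_apply (k n : ℕ) : (Dop ^ k) ((X : ℝ[X]) ^ n) = ((n : ℝ) ^ k) • X ^ n := by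
  induction k with
  | zero => simp
  | succ k ih =>
    rw [pow_succ, Module.End.mul_apply, Dop_apply]
    rcases n with _ | m
    · simp
    · rw [derivative_X_pow]
      have : (X : ℝ[X]) * (C ((m + 1 : ℕ) : ℝ) * X ^ (m + 1 - 1)) =
          ((m + 1 : ℕ) : ℝ) • X ^ (m + 1) := by
        rw [smul_eq_C_mul, Nat.add_sub_cancel]
        ring
      rw [this, _root_.map_smul, ih, smul_smul]
      push_cast
      ring_nf

lemma dvd_Dop {μ : ℝ} {s : ℕ} {Q : ℝ[X]} (h : (X - C μ) ^ (s + 1) ∣ Q) :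
    (X - C μ) ^ s ∣ Dop Q := by
  obtain ⟨R, rfl⟩ := h
  refine ⟨X * (C ((s : ℝ) + 1) * R + (X - C μ) * derivative R), ?_⟩
  rw [Dop_apply, derivative_mul, derivative_pow, derivative_X_sub_C]
  push_cast
  ring

lemma dvd_Dop_pow {μ : ℝ} : ∀ (k s : ℕ) (Q : ℝ[X]), (X - C μ) ^ (s + k) ∣ Q →
    (X - C μ) ^ s ∣ (Dop ^ k) Q := by
  intro k
  induction k with
  | zero => intro s Q h; simpa using h
  | succ k ih =>
    intro s Q h
    rw [pow_succ, Module.End.mul_apply]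
    exact ih s (Dop Q) (dvd_Dop (by rwa [← add_assoc] at h))


/-- Uniqueness of solutions of the recurrence given initial data. -/
lemma unique (p : ℕ) (hp : 0 < p) (φ : Fin p → ℝ) (x y : ℕ → ℝ)
    (hx : ∀ t : ℕ, x (t + p) = ∑ i : Fin p, φ i * x (t + p - 1 - i.val))
    (hy : ∀ t : ℕ, y (t + p) = ∑ i : Fin p, φ i * y (t + p - 1 - i.val))
    (h0 : ∀ i < p, x i = y i) : ∀ t, x t = y t := by
  intro t
  induction t using Nat.strong_induction_on with
  | _ t ih =>
    by_cases h : t < p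
    · exact h0 t h
    · push_neg at h
      obtain ⟨s, rfl⟩ : ∃ s, t = s + p := ⟨t - p, by omega⟩
      rw [hx, hy]
      refine Finset.sum_congr rfl fun i _ => ?_
      have hi := i.2
      rw [ih (s + p - 1 - i.val) (by omega)]

/-- The basic solutions `t ↦ t^k μ^t` satisfy the recurrence. -/
lemma sat (p : ℕ) (φ : Fin p → ℝ) (μ : ℝ) (k m : ℕ) (hk : k < m)
    (hdvd : (X - C μ) ^ m ∣ ((X : ℝ[X]) ^ p - ∑ i : Fin p, C (φ i) * X ^ (p - 1 - i.val)))
    (t : ℕ) :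
    ((t + p : ℕ) : ℝ) ^ k * μ ^ (t + p) =
      ∑ i : Fin p, φ i * (((t + (p - 1 - i.val) : ℕ) : ℝ) ^ k * μ ^ (t + (p - 1 - i.val))) := by
  set fR : ℝ[X] := (X : ℝ[X]) ^ p - ∑ i : Fin p, C (φ i) * X ^ (p - 1 - i.val) with hfR
  have hP : (X : ℝ[X]) ^ t * fR =
      X ^ (t + p) - ∑ i : Fin p, C (φ i) * X ^ (t + (p - 1 - i.val)) := by
    rw [hfR, mul_sub, ← pow_add, Finset.mul_sum]
    congr 1
    refine Finset.sum_congr rfl fun i _ => ?_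
    rw [pow_add]
    ring
  have h1 : (X - C μ) ^ (1 + k) ∣ (X : ℝ[X]) ^ t * fR :=
    dvd_mul_of_dvd_right (dvd_trans (pow_dvd_pow _ (by omega)) hdvd) _
  have h2 : (X - C μ) ^ 1 ∣ (Dop ^ k) ((X : ℝ[X]) ^ t * fR) := dvd_Dop_pow k 1 _ h1
  have h3 : eval μ ((Dop ^ k) ((X : ℝ[X]) ^ t * fR)) = 0 := by
    obtain ⟨R, hR⟩ := h2
    rw [hR, pow_one, eval_mul, eval_sub, eval_X, eval_C, sub_self, zero_mul]
  rw [hP, map_sub, map_sum, Dop_pow_apply] at h3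
  have h4 : ∀ i : Fin p, (Dop ^ k) (C (φ i) * (X : ℝ[X]) ^ (t + (p - 1 - i.val))) =
      φ i • (((t + (p - 1 - i.val) : ℕ) : ℝ) ^ k • X ^ (t + (p - 1 - i.val))) := by
    intro i
    rw [← smul_eq_C_mul, _root_.map_smul, Dop_pow_apply]
  simp only [h4] at h3
  simp only [eval_sub, eval_smul, eval_finset_sum, eval_pow, eval_X, smul_eq_mul] at h3
  exact sub_eq_zero.mp h3

/-- Independence of "generalized eigenvector fibers" for the shift operator. -/
lemma fiber_zero (N : ℕ) : ∀ (F : Finset ℝ) (w : ℝ → (ℕ → ℝ)),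
    (∀ μ ∈ F, (Polynomial.aeval S ((X - C μ) ^ N)) (w μ) = 0) →
    ∑ μ ∈ F, w μ = 0 → ∀ μ ∈ F, w μ = 0 := by
  intro F
  induction F using Finset.induction with
  | empty => simp
  | @insert a F hnotmem ih =>
    intro w hker hsum μ hμ
    have hwa : w a = 0 := by
      have hcop : IsCoprime (∏ b ∈ F, (X - C b) ^ N) ((X - C a) ^ N : ℝ[X]) := by
        refine IsCoprime.prod_left fun b hb => ?_
        have hba : b ≠ a := fun h => hnotmem (h ▸ hb)
        refine IsCoprime.pow ?_
        have hab0 : a - b ≠ 0 := sub_ne_zero.mpr (Ne.symm hba)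
        refine ⟨C ((a - b)⁻¹), -C ((a - b)⁻¹), ?_⟩
        have e1 : C ((a - b)⁻¹) * (X - C b) + -C ((a - b)⁻¹) * (X - C a) =
            C ((a - b)⁻¹) * ((X - C b) - (X - C a)) := by ring
        have e2 : (X - C b) - (X - C a) = C (a - b) := by rw [map_sub]; ring
        rw [e1, e2, ← C_mul, inv_mul_cancel₀ hab0, C_1]
      have h1 : (Polynomial.aeval S (∏ b ∈ F, (X - C b) ^ N)) (w a) = 0 := by
        have h2 : (Polynomial.aeval S (∏ b ∈ F, (X - C b) ^ N))
            (∑ μ ∈ insert a F, w μ) = 0 := by rw [hsum, map_zero]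
        rw [Finset.sum_insert hnotmem, map_add] at h2
        have h3 : ∀ b ∈ F, (Polynomial.aeval S (∏ c ∈ F, (X - C c) ^ N)) (w b) = 0 := by
          intro b hb
          rw [← Finset.prod_erase_mul F _ hb, map_mul, Module.End.mul_apply,
            hker b (Finset.mem_insert_of_mem hb), map_zero]
        rw [map_sum] at h2
        rw [Finset.sum_congr rfl h3, Finset.sum_const, smul_zero, add_zero] at h2
        exact h2
      obtain ⟨A, B, hAB⟩ := hcop
      have := congrArg (fun P => (Polynomial.aeval S P) (w a)) hAB
      simp only [map_add, map_mul, map_one, LinearMap.add_apply, Module.End.mul_apply,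
        Module.End.one_apply] at this
      rw [h1, hker a (Finset.mem_insert_self a F), map_zero, map_zero, add_zero] at this
      exact this.symm
    rcases Finset.mem_insert.mp hμ with rfl | hμF
    · exact hwa
    · refine ih w (fun ν hν => hker ν (Finset.mem_insert_of_mem hν)) ?_ μ hμF
      rw [Finset.sum_insert hnotmem, hwa, zero_add] at hsum
      exact hsum

end RRGS
end Helpers

set_option maxHeartbeats 1000000 in
open RRGS Polynomial in
/-- Real-roots case: assume every root of the characteristic polynomial is a real
number of modulus < 1.  Then there is a nonempty set 𝒞 ⊆ ℝ^p whose complement is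
Lebesgue-null such that for every initial data in 𝒞, the solution (x_t) of the
linear recurrence (L) admits r > 0, l ∈ {1,…,p} and reals (v_t) with
x_t/(t^{l−1}r^t) − v_t → 0, sup_t |v_t| < ∞ and liminf_t |v_t| > 0. -/
theorem real_roots_good_set (p : ℕ) (hp : 0 < p) (φ : Fin p → ℝ)
    (hφ : φ ⟨p - 1, by omega⟩ ≠ 0) (lam : Fin p → ℂ)
    (hroots : ∀ z : ℂ,
      z ^ p - ∑ i : Fin p, (φ i : ℂ) * z ^ (p - 1 - i.val) = ∏ j, (z - lam j))
    (hH : ∀ j, ‖lam j‖ < 1)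
    (hreal : ∀ j, (lam j).im = 0) :
    ∃ C : Set (Fin p → ℝ), C.Nonempty ∧ volume Cᶜ = 0 ∧
      ∀ x₀ ∈ C, ∀ x : ℕ → ℝ,
        (∀ i : Fin p, x i.val = x₀ i) →
        (∀ t : ℕ, x (t + p) = ∑ i : Fin p, φ i * x (t + p - 1 - i.val)) →
        ∃ r : ℝ, 0 < r ∧ ∃ l : ℕ, 1 ≤ l ∧ l ≤ p ∧ ∃ v : ℕ → ℝ,
          Tendsto (fun t : ℕ => |x t / ((t : ℝ) ^ (l - 1) * r ^ t) - v t|)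
            atTop (nhds 0) ∧
          BddAbove (Set.range fun t : ℕ => |v t|) ∧
          0 < Filter.liminf (fun t : ℕ => |v t|) atTop := by
  classical
  haveI hFinNe : Nonempty (Fin p) := ⟨⟨0, hp⟩⟩
  set ν : Fin p → ℝ := fun j => (lam j).re with hν
  have hlam : ∀ j, lam j = ((ν j : ℝ) : ℂ) := fun j => Complex.ext rfl (by simp [hν, hreal j])
  set fR : ℝ[X] := (X : ℝ[X]) ^ p - ∑ i : Fin p, Polynomial.C (φ i) * X ^ (p - 1 - i.val)
    with hfR
  have hmap : fR.map (algebraMap ℝ ℂ) = ∏ j, (X - Polynomial.C (lam j)) := by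
    apply Polynomial.funext
    intro z
    have h := hroots z
    simp only [hfR, Polynomial.map_sub, Polynomial.map_pow, Polynomial.map_sum,
      Polynomial.map_mul, Polynomial.map_C, Polynomial.map_X, eval_sub, eval_pow, eval_X,
      eval_finset_sum, eval_mul, eval_C, eval_prod, Complex.coe_algebraMap]
    simpa using h
  -- all roots are nonzero
  have hlam0 : ∀ j, lam j ≠ 0 := by
    intro j hj
    have h0 := hroots 0
    have hsum : ∑ i : Fin p, (φ i : ℂ) * (0 : ℂ) ^ (p - 1 - i.val)
        = ((φ ⟨p - 1, by omega⟩ : ℝ) : ℂ) := by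
      rw [Finset.sum_eq_single (⟨p - 1, by omega⟩ : Fin p)]
      · simp
      · intro i _ hne
        have h1 : i.val ≠ p - 1 := fun h => hne (Fin.ext h)
        have h2 := i.2
        rw [zero_pow (by omega), mul_zero]
      · intro h; exact absurd (Finset.mem_univ _) h
    rw [hsum, zero_pow hp.ne', zero_sub,
      Finset.prod_eq_zero (Finset.mem_univ j) (by rw [hj, sub_zero])] at h0
    exact hφ (by exact_mod_cast neg_eq_zero.mp h0)
  have hν0 : ∀ j, ν j ≠ 0 := fun j h => hlam0 j (by rw [hlam j, h]; simp)
  -- occurrence index and multiplicity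
  set kk : Fin p → ℕ := fun j => (Finset.univ.filter (fun i => i < j ∧ ν i = ν j)).card with hkk
  set ml : Fin p → ℕ := fun j => (Finset.univ.filter (fun i => ν i = ν j)).card with hml
  have hkm : ∀ j, kk j < ml j := by
    intro j
    apply Finset.card_lt_card
    have hsub : Finset.univ.filter (fun i => i < j ∧ ν i = ν j)
        ⊆ Finset.univ.filter (fun i => ν i = ν j) := by
      intro i hi
      simp only [Finset.mem_filter, Finset.mem_univ, true_and] at *
      exact hi.2
    refine (Finset.ssubset_iff_of_subset hsub).mpr ⟨j, by simp, by simp⟩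
  have hmlp : ∀ j, ml j ≤ p := fun j => le_trans (Finset.card_filter_le _ _) (by simp)
  have hkmono : ∀ j j', j < j' → ν j = ν j' → kk j < kk j' := by
    intro j j' hlt hνeq
    apply Finset.card_lt_card
    have hsub : Finset.univ.filter (fun i => i < j ∧ ν i = ν j)
        ⊆ Finset.univ.filter (fun i => i < j' ∧ ν i = ν j') := by
      intro i hi
      simp only [Finset.mem_filter, Finset.mem_univ, true_and] at *
      exact ⟨hi.1.trans hlt, hi.2.trans hνeq⟩
    refine (Finset.ssubset_iff_of_subset hsub).mpr ⟨j, by simp [hlt, hνeq], by simp⟩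
  have hkinj : ∀ j j', ν j = ν j' → kk j = kk j' → j = j' := by
    intro j j' h1 h2
    rcases lt_trichotomy j j' with h | h | h
    · exact absurd (hkmono j j' h h1) (by omega)
    · exact h
    · exact absurd (hkmono j' j h h1.symm) (by omega)
  -- divisibility of the characteristic polynomial
  have hdvd : ∀ j, ((X : ℝ[X]) - Polynomial.C (ν j)) ^ (ml j) ∣ fR := by
    intro j
    rw [← Polynomial.map_dvd_map' (algebraMap ℝ ℂ), Polynomial.map_pow, Polynomial.map_sub,
      Polynomial.map_X, Polynomial.map_C, hmap]
    rw [← Finset.prod_filter_mul_prod_filter_not Finset.univ (fun i => ν i = ν j)]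
    apply dvd_mul_of_dvd_left
    have hc : ∀ i ∈ Finset.univ.filter (fun i => ν i = ν j),
        (X : ℂ[X]) - Polynomial.C (lam i) = X - Polynomial.C (algebraMap ℝ ℂ (ν j)) := by
      intro i hi
      simp only [Finset.mem_filter] at hi
      rw [hlam i, hi.2, Complex.coe_algebraMap]
    rw [Finset.prod_congr rfl hc, Finset.prod_const]
  -- the basic solutions
  set u : Fin p → (ℕ → ℝ) := fun j t => (t : ℝ) ^ (kk j) * (ν j) ^ t with hu
  have hidx : ∀ (t : ℕ) (i : Fin p), t + p - 1 - i.val = t + (p - 1 - i.val) := by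
    intro t i; have := i.2; omega
  have hu_rec : ∀ j (t : ℕ), u j (t + p) = ∑ i : Fin p, φ i * u j (t + p - 1 - i.val) := by
    intro j t
    have hs := RRGS.sat p φ (ν j) (kk j) (ml j) (hkm j) (hfR ▸ hdvd j) t
    have h2 : ∀ i : Fin p, u j (t + p - 1 - i.val)
        = ((t + (p - 1 - i.val) : ℕ) : ℝ) ^ (kk j) * ν j ^ (t + (p - 1 - i.val)) := by
      intro i; rw [hidx t i]
    show ((t + p : ℕ) : ℝ) ^ (kk j) * ν j ^ (t + p) = _
    rw [hs]
    exact (Finset.sum_congr rfl fun i _ => by rw [h2 i]).symm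
  -- linear independence of the basic solutions
  have hui : LinearIndependent ℝ u := by
    rw [Fintype.linearIndependent_iff]
    intro g hg
    set w : ℝ → (ℕ → ℝ) := fun μ => ∑ j ∈ Finset.univ.filter (fun j => ν j = μ), g j • u j
      with hw
    have hsum : ∑ μ ∈ Finset.univ.image ν, w μ = 0 := by
      rw [hw, Finset.sum_fiberwise_of_maps_to
        (fun j _ => Finset.mem_image_of_mem ν (Finset.mem_univ j))]
      exact hg
    have haev : ∀ (μ : ℝ) (n : ℕ),
        Polynomial.aeval RRGS.S ((X - Polynomial.C μ) ^ n) = (RRGS.S - μ • 1) ^ n := by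
      intro μ n
      rw [map_pow, map_sub, Polynomial.aeval_X, Polynomial.aeval_C,
        Module.algebraMap_end_eq_smul_id]
      rfl
    have hker : ∀ μ ∈ Finset.univ.image ν,
        (Polynomial.aeval RRGS.S ((X - Polynomial.C μ) ^ p)) (w μ) = 0 := by
      intro μ hμ
      rw [hw, map_sum]
      refine Finset.sum_eq_zero fun j hj => ?_
      simp only [Finset.mem_filter, Finset.mem_univ, true_and] at hj
      subst hj
      rw [_root_.map_smul]
      have hj' : u j = RRGS.seqP (X ^ (kk j)) (ν j) := by
        funext t; simp [RRGS.seqP, hu]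
      have hk1 : kk j + 1 ≤ p := by have h1 := hkm j; have h2 := hmlp j; omega
      have hdecomp : ((X : ℝ[X]) - Polynomial.C (ν j)) ^ p
          = (X - Polynomial.C (ν j)) ^ (p - (kk j + 1)) * (X - Polynomial.C (ν j)) ^ (kk j + 1)
          := by rw [← pow_add]; congr 1; omega
      have hz : (Polynomial.aeval RRGS.S (((X : ℝ[X]) - Polynomial.C (ν j)) ^ p)) (u j) = 0 := by
        rw [hdecomp, map_mul, Module.End.mul_apply, haev, haev, hj',
          RRGS.ker_pow (ν j) (kk j) _ (le_of_eq (natDegree_X_pow _)), map_zero]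
      rw [hz, smul_zero]
    have hz := RRGS.fiber_zero p _ w hker hsum
    intro j
    have hwj := hz (ν j) (Finset.mem_image_of_mem ν (Finset.mem_univ j))
    set q : ℝ[X] := ∑ j' ∈ Finset.univ.filter (fun j' => ν j' = ν j),
      Polynomial.C (g j') * X ^ (kk j') with hq
    have hqs : RRGS.seqP q (ν j) = w (ν j) := by
      funext t
      simp only [RRGS.seqP, hq, eval_finset_sum, eval_mul, eval_C, eval_pow, eval_X, hw,
        Finset.sum_apply, Pi.smul_apply, smul_eq_mul, Finset.sum_mul, hu]
      refine Finset.sum_congr rfl fun j' hj' => ?_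
      simp only [Finset.mem_filter, Finset.mem_univ, true_and] at hj'
      rw [hj']
      ring
    have hq0 : q = 0 := by
      apply Polynomial.eq_zero_of_infinite_isRoot
      apply Set.infinite_of_injective_forall_mem (f := fun n : ℕ => (n : ℝ))
        (fun a b h => Nat.cast_injective h)
      intro n
      have h1 : RRGS.seqP q (ν j) n = 0 := by rw [hqs, hwj]; rfl
      have h2 : (ν j) ^ n ≠ 0 := pow_ne_zero _ (hν0 j)
      exact (mul_eq_zero.mp h1).resolve_right h2
    have hcoeff : g j = q.coeff (kk j) := by
      rw [hq, Polynomial.finset_sum_coeff, Finset.sum_eq_single j]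
      · simp [Polynomial.coeff_C_mul, Polynomial.coeff_X_pow]
      · intro j' hj' hne
        simp only [Finset.mem_filter, Finset.mem_univ, true_and] at hj'
        have hne2 : kk j' ≠ kk j := fun h => hne (hkinj j' j hj' h)
        simp only [Polynomial.coeff_C_mul, Polynomial.coeff_X_pow]
        rw [if_neg (fun h => hne2 h.symm), mul_zero]
      · intro h; exact absurd (by simp) h
    rw [hcoeff, hq0, Polynomial.coeff_zero]
  -- sums of basic solutions satisfy the recurrence
  have hsumrec : ∀ (c : Fin p → ℝ) (t : ℕ),
      (∑ j, c j * u j (t + p)) = ∑ i : Fin p, φ i * ∑ j, c j * u j (t + p - 1 - i.val) := by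
    intro c t
    calc ∑ j, c j * u j (t + p) = ∑ j, ∑ i : Fin p, c j * (φ i * u j (t + p - 1 - i.val)) := by
          refine Finset.sum_congr rfl fun j _ => ?_
          rw [hu_rec j t, Finset.mul_sum]
      _ = ∑ i : Fin p, ∑ j, c j * (φ i * u j (t + p - 1 - i.val)) := Finset.sum_comm
      _ = ∑ i : Fin p, φ i * ∑ j, c j * u j (t + p - 1 - i.val) := by
          refine Finset.sum_congr rfl fun i _ => ?_
          rw [Finset.mul_sum]
          refine Finset.sum_congr rfl fun j _ => ?_
          ring
  -- linear independence of initial-value vectors, basis of ℝ^p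
  set wv : Fin p → (Fin p → ℝ) := fun j i => u j i.val with hwv
  have hwvi : LinearIndependent ℝ wv := by
    rw [Fintype.linearIndependent_iff]
    intro g hg
    have huz : (∑ j, g j • u j) = 0 := by
      have hrec1 : ∀ t : ℕ, (fun s => ∑ j, g j * u j s) (t + p)
          = ∑ i : Fin p, φ i * (fun s => ∑ j, g j * u j s) (t + p - 1 - i.val) :=
        fun t => hsumrec g t
      have hinit1 : ∀ i < p, (fun s => ∑ j, g j * u j s) i = (0 : ℕ → ℝ) i := by
        intro i hi
        have := congrFun hg ⟨i, hi⟩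
        simpa [hwv, Finset.sum_apply, Pi.smul_apply] using this
      have := RRGS.unique p hp φ _ 0 hrec1 (by intro t; simp) hinit1
      funext t
      simpa [Finset.sum_apply, Pi.smul_apply] using this t
    exact Fintype.linearIndependent_iff.mp hui g huz
  have hcard : Fintype.card (Fin p) = Module.finrank ℝ (Fin p → ℝ) := by
    simp [Module.finrank_fintype_fun_eq_card]
  let B : Module.Basis (Fin p) ℝ (Fin p → ℝ) := basisOfLinearIndependentOfCardEqFinrank hwvi hcard
  have hB : ∀ j, B j = wv j := fun j => by
    rw [coe_basisOfLinearIndependentOfCardEqFinrank]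
  -- every solution is a combination of basic solutions
  have hrepr : ∀ (x₀ : Fin p → ℝ) (x : ℕ → ℝ), (∀ i : Fin p, x i.val = x₀ i) →
      (∀ t : ℕ, x (t + p) = ∑ i : Fin p, φ i * x (t + p - 1 - i.val)) →
      ∀ t, x t = ∑ j, B.repr x₀ j * u j t := by
    intro x₀ x hinit hrec
    refine RRGS.unique p hp φ x _ hrec (fun t => hsumrec _ t) ?_
    intro i hi
    have h1 := hinit ⟨i, hi⟩
    have h2 := congrFun (B.sum_repr x₀) ⟨i, hi⟩
    simp only [Finset.sum_apply, Pi.smul_apply, smul_eq_mul] at h2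
    rw [h1, ← h2]
    refine (Finset.sum_congr rfl fun j _ => ?_).symm
    rw [hB j]
  -- dominant modulus and degree
  have hune : (Finset.univ : Finset (Fin p)).Nonempty := ⟨⟨0, hp⟩, Finset.mem_univ _⟩
  set r : ℝ := Finset.univ.sup' hune (fun j => |ν j|) with hr
  have hle_r : ∀ j, |ν j| ≤ r := by
    intro j; rw [hr]; exact Finset.le_sup' (fun j => |ν j|) (Finset.mem_univ j)
  have hr_pos : 0 < r := lt_of_lt_of_le (abs_pos.mpr (hν0 ⟨0, hp⟩)) (hle_r ⟨0, hp⟩)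
  set D : Finset (Fin p) := Finset.univ.filter (fun j => |ν j| = r) with hD
  have hDne : D.Nonempty := by
    obtain ⟨j, _, hj⟩ := Finset.exists_mem_eq_sup' hune (fun j => |ν j|)
    exact ⟨j, Finset.mem_filter.mpr ⟨Finset.mem_univ _, hj.symm⟩⟩
  set l : ℕ := D.sup' hDne (fun j => kk j + 1) with hl
  obtain ⟨j₀, hj₀D, hj₀⟩ := Finset.exists_mem_eq_sup' hDne (fun j => kk j + 1)
  have hl1 : 1 ≤ l := by
    rw [hl, hj₀]; omega
  have hlp : l ≤ p := by
    rw [hl]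
    apply Finset.sup'_le
    intro j _
    have h1 := hkm j; have h2 := hmlp j; omega
  have hlD : ∀ j ∈ D, kk j + 1 ≤ l := by
    intro j hj; rw [hl]; exact Finset.le_sup' (fun j => kk j + 1) hj
  set SA : Finset (Fin p) := Finset.univ.filter (fun j => ν j = r ∧ kk j = l - 1) with hSA
  set SB : Finset (Fin p) := Finset.univ.filter (fun j => ν j = -r ∧ kk j = l - 1) with hSB
  have hdisj : Disjoint SA SB := by
    rw [Finset.disjoint_left]
    intro j hjA hjB
    simp only [hSA, hSB, Finset.mem_filter, Finset.mem_univ, true_and] at hjA hjB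
    have : r = -r := hjA.1 ▸ hjB.1
    nlinarith
  -- the two linear functionals
  set Fp : (Fin p → ℝ) →ₗ[ℝ] ℝ := (∑ j ∈ SA, B.coord j) + ∑ j ∈ SB, B.coord j with hFp
  set Fm : (Fin p → ℝ) →ₗ[ℝ] ℝ := (∑ j ∈ SA, B.coord j) - ∑ j ∈ SB, B.coord j with hFm
  have hFpapp : ∀ x₀, Fp x₀ = (∑ j ∈ SA, B.repr x₀ j) + ∑ j ∈ SB, B.repr x₀ j := by
    intro x₀
    simp [hFp, LinearMap.sum_apply, Module.Basis.coord_apply]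
  have hFmapp : ∀ x₀, Fm x₀ = (∑ j ∈ SA, B.repr x₀ j) - ∑ j ∈ SB, B.repr x₀ j := by
    intro x₀
    simp [hFm, LinearMap.sum_apply, Module.Basis.coord_apply]
  -- j₀ lies in exactly one of SA, SB
  have hj₀k : kk j₀ = l - 1 := by omega
  have hj₀r : ν j₀ = r ∨ ν j₀ = -r := by
    have : |ν j₀| = r := by
      simp only [hD, Finset.mem_filter] at hj₀D
      exact hj₀D.2
    rcases abs_cases (ν j₀) with ⟨h1, _⟩ | ⟨h1, _⟩
    · left; rw [← h1, this]
    · right; rw [← this, h1]; ring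
  have hsingle : ∀ (s : Finset (Fin p)), (∑ j ∈ s, B.repr (B j₀) j)
      = if j₀ ∈ s then 1 else 0 := by
    intro s
    rw [B.repr_self]
    classical
    rw [Finset.sum_congr rfl (fun j _ => Finsupp.single_apply (a := j₀) (b := (1:ℝ)))]
    exact Finset.sum_ite_eq s j₀ (fun _ => (1:ℝ))
  have hwit : Fp (B j₀) ≠ 0 ∧ Fm (B j₀) ≠ 0 := by
    rcases hj₀r with h | h
    · have hA : j₀ ∈ SA := by simp [hSA, h, hj₀k]
      have hBn : j₀ ∉ SB := Finset.disjoint_left.mp hdisj hA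
      rw [hFpapp, hFmapp, hsingle, hsingle, if_pos hA, if_neg hBn]
      norm_num
    · have hBm : j₀ ∈ SB := by simp [hSB, h, hj₀k]
      have hAn : j₀ ∉ SA := (Finset.disjoint_right.mp hdisj) hBm
      rw [hFpapp, hFmapp, hsingle, hsingle, if_pos hBm, if_neg hAn]
      norm_num
  -- the good set
  refine ⟨{x₀ | Fp x₀ ≠ 0 ∧ Fm x₀ ≠ 0}, ⟨B j₀, hwit⟩, ?_, ?_⟩
  · -- null complement
    have hsub : {x₀ : Fin p → ℝ | Fp x₀ ≠ 0 ∧ Fm x₀ ≠ 0}ᶜ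
        ⊆ (LinearMap.ker Fp : Set (Fin p → ℝ)) ∪ (LinearMap.ker Fm : Set (Fin p → ℝ)) := by
      intro x₀ hx₀
      simp only [Set.mem_compl_iff, Set.mem_setOf_eq, not_and_or, not_not] at hx₀
      rcases hx₀ with h | h
      · exact Or.inl h
      · exact Or.inr h
    refine measure_mono_null hsub (measure_union_null ?_ ?_)
    · exact Measure.addHaar_submodule volume _
        (fun h => hwit.1 (LinearMap.ker_eq_top.mp h ▸ rfl))
    · exact Measure.addHaar_submodule volume _
        (fun h => hwit.2 (LinearMap.ker_eq_top.mp h ▸ rfl))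
  · -- main estimate
    rintro x₀ ⟨hFpx, hFmx⟩ x hinit hrec
    set c : Fin p → ℝ := fun j => B.repr x₀ j with hc
    have hxt : ∀ t, x t = ∑ j, c j * u j t := hrepr x₀ x hinit hrec
    refine ⟨r, hr_pos, l, hl1, hlp, ?_⟩
    set aN : ℝ := ∑ j ∈ SA, c j with haN
    set bN : ℝ := ∑ j ∈ SB, c j with hbN
    have habp : aN + bN ≠ 0 := by rw [haN, hbN, ← hFpapp]; exact hFpx
    have habm : aN - bN ≠ 0 := by rw [haN, hbN, ← hFmapp]; exact hFmx
    refine ⟨fun t => aN + (-1 : ℝ) ^ t * bN, ?_, ?_, ?_⟩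
    · -- convergence
      set RST : Finset (Fin p) := Finset.univ \ (SA ∪ SB) with hRST
      have hsplit : ∀ t : ℕ, x t = aN * ((t : ℝ) ^ (l - 1) * r ^ t)
          + bN * ((t : ℝ) ^ (l - 1) * (-r) ^ t)
          + ∑ j ∈ RST, c j * ((t : ℝ) ^ (kk j) * ν j ^ t) := by
        intro t
        rw [hxt t, ← Finset.sum_sdiff (Finset.subset_univ (SA ∪ SB)), Finset.sum_union hdisj]
        have hA : ∑ j ∈ SA, c j * u j t = aN * ((t : ℝ) ^ (l - 1) * r ^ t) := by
          rw [haN, Finset.sum_mul]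
          refine Finset.sum_congr rfl fun j hj => ?_
          simp only [hSA, Finset.mem_filter, Finset.mem_univ, true_and] at hj
          show c j * ((t : ℝ) ^ (kk j) * ν j ^ t) = _
          rw [hj.1, hj.2]
        have hB' : ∑ j ∈ SB, c j * u j t = bN * ((t : ℝ) ^ (l - 1) * (-r) ^ t) := by
          rw [hbN, Finset.sum_mul]
          refine Finset.sum_congr rfl fun j hj => ?_
          simp only [hSB, Finset.mem_filter, Finset.mem_univ, true_and] at hj
          show c j * ((t : ℝ) ^ (kk j) * ν j ^ t) = _
          rw [hj.1, hj.2]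
        rw [hA, hB']
        ring
      have hterm : ∀ j ∈ RST, Tendsto
          (fun t : ℕ => c j * ((t : ℝ) ^ (kk j) * ν j ^ t / ((t : ℝ) ^ (l - 1) * r ^ t)))
          atTop (nhds 0) := by
        intro j hj
        rw [hRST, Finset.mem_sdiff, Finset.mem_union] at hj
        have hjA : ¬(ν j = r ∧ kk j = l - 1) := by
          intro h; exact hj.2 (Or.inl (by simp [hSA, h.1, h.2]))
        have hjB : ¬(ν j = -r ∧ kk j = l - 1) := by
          intro h; exact hj.2 (Or.inr (by simp [hSB, h.1, h.2]))
        have hmain : Tendsto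
            (fun t : ℕ => (t : ℝ) ^ (kk j) * ν j ^ t / ((t : ℝ) ^ (l - 1) * r ^ t))
            atTop (nhds 0) := by
          rw [tendsto_zero_iff_norm_tendsto_zero]
          rcases lt_or_eq_of_le (hle_r j) with hlt | heq
          · -- strictly smaller modulus
            have hν0j : 0 < |ν j| := abs_pos.mpr (hν0 j)
            have hρ : 1 < r / |ν j| := (one_lt_div hν0j).mpr hlt
            have hb : Tendsto (fun t : ℕ => (t : ℝ) ^ (kk j) * (|ν j| / r) ^ t)
                atTop (nhds 0) := by
              have h1 := tendsto_pow_const_div_const_pow_of_one_lt (kk j) hρ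
              refine h1.congr fun t => ?_
              rw [div_pow, div_pow, div_div_eq_mul_div, mul_div_assoc]
            refine squeeze_zero' (Eventually.of_forall fun t => norm_nonneg _) ?_ hb
            filter_upwards [eventually_ge_atTop 1] with t ht
            have ht1 : (1 : ℝ) ≤ (t : ℝ) := by exact_mod_cast ht
            have htpos : (0 : ℝ) < (t : ℝ) := lt_of_lt_of_le zero_lt_one ht1
            have htpow : (1 : ℝ) ≤ (t : ℝ) ^ (l - 1) := one_le_pow₀ ht1
            have hrt : (0 : ℝ) < r ^ t := pow_pos hr_pos t
            have hval : ‖(t:ℝ) ^ (kk j) * ν j ^ t / ((t:ℝ) ^ (l - 1) * r ^ t)‖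
                = (t:ℝ) ^ (kk j) * |ν j| ^ t / ((t:ℝ) ^ (l - 1) * r ^ t) := by
              rw [Real.norm_eq_abs, abs_div, abs_mul, abs_mul, abs_pow, abs_pow, abs_pow,
                abs_pow, Nat.abs_cast, abs_of_pos hr_pos]
            rw [hval, div_pow]
            have hid : (t:ℝ) ^ (kk j) * (|ν j| ^ t / r ^ t) * ((t:ℝ) ^ (l - 1) * r ^ t)
                = ((t:ℝ) ^ (kk j) * |ν j| ^ t) * (t:ℝ) ^ (l - 1) := by
              field_simp
            rw [div_le_iff₀ (by positivity), hid]
            calc (t:ℝ) ^ (kk j) * |ν j| ^ t = ((t:ℝ) ^ (kk j) * |ν j| ^ t) * 1 :=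
                  (mul_one _).symm
              _ ≤ ((t:ℝ) ^ (kk j) * |ν j| ^ t) * (t:ℝ) ^ (l - 1) :=
                  mul_le_mul_of_nonneg_left htpow (by positivity)
          · -- equal modulus, lower power
            have hνj : ν j = r ∨ ν j = -r := by
              rcases abs_cases (ν j) with ⟨h1, _⟩ | ⟨h1, _⟩
              · left; rw [← h1, heq]
              · right; rw [← heq, h1]; ring
            have hjD : j ∈ D := by rw [hD]; simp [heq]
            have hkle : kk j + 1 ≤ l := hlD j hjD
            have hkne : kk j ≠ l - 1 := by
              rcases hνj with h | h
              · exact fun hk => hjA ⟨h, hk⟩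
              · exact fun hk => hjB ⟨h, hk⟩
            have hk2 : kk j + 1 ≤ l - 1 := by omega
            have hb : Tendsto (fun t : ℕ => 1 / (t : ℝ)) atTop (nhds 0) :=
              tendsto_one_div_atTop_nhds_zero_nat
            refine squeeze_zero' (Eventually.of_forall fun t => norm_nonneg _) ?_ hb
            filter_upwards [eventually_ge_atTop 1] with t ht
            have ht1 : (1 : ℝ) ≤ (t : ℝ) := by exact_mod_cast ht
            have htpos : (0 : ℝ) < (t : ℝ) := lt_of_lt_of_le zero_lt_one ht1
            have hrt : (0 : ℝ) < r ^ t := pow_pos hr_pos t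
            have habs : |ν j| ^ t = r ^ t := by rw [heq]
            have hval : ‖(t:ℝ) ^ (kk j) * ν j ^ t / ((t:ℝ) ^ (l - 1) * r ^ t)‖
                = (t:ℝ) ^ (kk j) * r ^ t / ((t:ℝ) ^ (l - 1) * r ^ t) := by
              rw [Real.norm_eq_abs, abs_div, abs_mul, abs_mul, abs_pow, abs_pow, abs_pow,
                abs_pow, Nat.abs_cast, abs_of_pos hr_pos, habs]
            rw [hval, div_le_div_iff₀ (by positivity) htpos, one_mul]
            calc (t:ℝ) ^ (kk j) * r ^ t * (t:ℝ) = (t:ℝ) ^ (kk j + 1) * r ^ t := by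
                  rw [pow_succ]; ring
              _ ≤ (t:ℝ) ^ (l - 1) * r ^ t :=
                  mul_le_mul_of_nonneg_right (pow_le_pow_right₀ ht1 hk2) hrt.le
        have := hmain.const_mul (c j)
        simpa using this
      have h0 : Tendsto (fun t : ℕ => ∑ j ∈ RST,
          c j * ((t : ℝ) ^ (kk j) * ν j ^ t / ((t : ℝ) ^ (l - 1) * r ^ t)))
          atTop (nhds 0) := by
        have := tendsto_finset_sum RST hterm
        simpa using this
      have heq : ∀ᶠ t : ℕ in atTop,
          |∑ j ∈ RST, c j * ((t : ℝ) ^ (kk j) * ν j ^ t / ((t : ℝ) ^ (l - 1) * r ^ t))|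
          = |x t / ((t : ℝ) ^ (l - 1) * r ^ t) - (aN + (-1 : ℝ) ^ t * bN)| := by
        filter_upwards [eventually_ge_atTop 1] with t ht
        have ht1 : (1 : ℝ) ≤ (t : ℝ) := by exact_mod_cast ht
        have hden : ((t : ℝ) ^ (l - 1) * r ^ t) ≠ 0 := by positivity
        have hneg : (-r) ^ t = (-1 : ℝ) ^ t * r ^ t := by rw [neg_pow]
        have hxx : x t / ((t : ℝ) ^ (l - 1) * r ^ t) - (aN + (-1 : ℝ) ^ t * bN)
            = ∑ j ∈ RST, c j * ((t : ℝ) ^ (kk j) * ν j ^ t / ((t : ℝ) ^ (l - 1) * r ^ t)) := by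
          rw [hsplit t, hneg]
          rw [show aN * ((t:ℝ) ^ (l-1) * r ^ t)
              + bN * ((t:ℝ) ^ (l-1) * ((-1:ℝ) ^ t * r ^ t))
              + ∑ j ∈ RST, c j * ((t:ℝ) ^ (kk j) * ν j ^ t)
              = (aN + (-1:ℝ) ^ t * bN) * ((t:ℝ) ^ (l-1) * r ^ t)
                + ∑ j ∈ RST, c j * ((t:ℝ) ^ (kk j) * ν j ^ t) from by ring]
          rw [add_div, mul_div_cancel_right₀ _ hden, add_sub_cancel_left, Finset.sum_div]
          exact Finset.sum_congr rfl fun j _ => mul_div_assoc _ _ _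
        rw [hxx]
      exact Tendsto.congr' heq (by simpa using h0.abs)
    · -- boundedness
      refine ⟨|aN| + |bN|, ?_⟩
      rintro y ⟨t, rfl⟩
      calc |aN + (-1 : ℝ) ^ t * bN| ≤ |aN| + |(-1 : ℝ) ^ t * bN| := abs_add_le _ _
        _ = |aN| + |bN| := by
            rw [abs_mul, abs_pow, abs_neg, abs_one, one_pow, one_mul]
    · -- liminf
      have hvb : ∀ t : ℕ, min |aN + bN| |aN - bN| ≤ |aN + (-1 : ℝ) ^ t * bN| := by
        intro t
        rcases Nat.even_or_odd t with he | ho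
        · rw [he.neg_one_pow, one_mul]; exact min_le_left _ _
        · rw [ho.neg_one_pow, neg_one_mul, ← sub_eq_add_neg]; exact min_le_right _ _
      have hm0 : 0 < min |aN + bN| |aN - bN| := lt_min (abs_pos.mpr habp) (abs_pos.mpr habm)
      have hub : ∀ t : ℕ, |aN + (-1 : ℝ) ^ t * bN| ≤ |aN| + |bN| := by
        intro t
        calc |aN + (-1 : ℝ) ^ t * bN| ≤ |aN| + |(-1 : ℝ) ^ t * bN| := abs_add_le _ _
          _ = |aN| + |bN| := by
              rw [abs_mul, abs_pow, abs_neg, abs_one, one_pow, one_mul]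
      have hcb : IsCoboundedUnder (· ≥ ·) atTop (fun t : ℕ => |aN + (-1 : ℝ) ^ t * bN|) :=
        isCoboundedUnder_ge_of_le atTop hub
      calc (0 : ℝ) < min |aN + bN| |aN - bN| := hm0
        _ ≤ liminf (fun t : ℕ => |aN + (-1 : ℝ) ^ t * bN|) atTop :=
            le_liminf_of_le hcb (Eventually.of_forall hvb)
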